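/- Let A ∈ ℂ^{m×m} be Hermitian and B ∈ ℂ^{m×n}. Then the maximum of i_±(A - B·X·B*) over Hermitian X equals i_±([[A, B],[B*, 0]]), and the minimum of i_±(A - B·X·B*) over Hermitian X equals r[A, B] - i_∓([[A, B],[B*, 0]]). -/

import Mathlib

open Matrix ComplexOrder

/-- `X` satisfies the four Penrose equations for `A`, i.e. `X` is the
Moore–Penrose inverse of `A`. -/
def IsMP {m n : Type*} [Fintype m] [Fintype n]
    (A : Matrix m n ℂ) (X : Matrix n m ℂ) : Prop :=
  A * X * A = A ∧ X * A * X = X ∧ (A * X)ᴴ = A * X ∧ (X * A)ᴴ = X * A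

/-- the number of positive eigenvalues (with multiplicity) of a Hermitian matrix -/
noncomputable def iPos {n : Type*} [Fintype n] [DecidableEq n] {A : Matrix n n ℂ}
    (hA : A.IsHermitian) : ℕ := Nat.card {i // 0 < hA.eigenvalues i}

/-- the number of negative eigenvalues (with multiplicity) of a Hermitian matrix -/
noncomputable def iNeg {n : Type*} [Fintype n] [DecidableEq n] {A : Matrix n n ℂ}
    (hA : A.IsHermitian) : ℕ := Nat.card {i // hA.eigenvalues i < 0}
open Complex
set_option linter.unusedSectionVars false

section master
variable {ι : Type*} [Fintype ι] [DecidableEq ι] {A : Matrix ι ι ℂ} (hA : A.IsHermitian)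
variable {ι : Type*} [Fintype ι] [DecidableEq ι] {A : Matrix ι ι ℂ} (hA : A.IsHermitian)

noncomputable def ycoord (hA : A.IsHermitian) (x : ι → ℂ) : ι → ℂ :=
  star (hA.eigenvectorUnitary : Matrix ι ι ℂ) *ᵥ x

lemma x_eq_U_mulVec (x : ι → ℂ) :
    (hA.eigenvectorUnitary : Matrix ι ι ℂ) *ᵥ ycoord hA x = x := by
  rw [ycoord, mulVec_mulVec, (Matrix.mem_unitaryGroup_iff).mp hA.eigenvectorUnitary.2, one_mulVec]

lemma mulVec_eq_zero_iff_ycoord {x : ι → ℂ} :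
    A *ᵥ x = 0 ↔ ∀ i, hA.eigenvalues i ≠ 0 → ycoord hA x i = 0 := by
  have key : A *ᵥ x = (hA.eigenvectorUnitary : Matrix ι ι ℂ) *ᵥ
      (fun i => (hA.eigenvalues i : ℂ) * ycoord hA x i) := by
    conv_lhs => rw [hA.spectral_theorem, Unitary.conjStarAlgAut_apply]
    rw [← mulVec_mulVec, ← mulVec_mulVec, ← ycoord]
    have : diagonal (RCLike.ofReal ∘ hA.eigenvalues) *ᵥ ycoord hA x =
        (fun i => (hA.eigenvalues i : ℂ) * ycoord hA x i) := by
      ext i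
      rw [mulVec_diagonal]
      simp [RCLike.ofReal_alg]
    rw [this]
  constructor
  · intro h i hi
    have h2 : (fun i => (hA.eigenvalues i : ℂ) * ycoord hA x i) = 0 := by
      have := congrArg (fun v => star (hA.eigenvectorUnitary : Matrix ι ι ℂ) *ᵥ v) (key.symm.trans h)
      have h4 : star (hA.eigenvectorUnitary : Matrix ι ι ℂ) *ᵥ ((hA.eigenvectorUnitary : Matrix ι ι ℂ) *ᵥ (fun i => (hA.eigenvalues i : ℂ) * ycoord hA x i)) = (fun i => (hA.eigenvalues i : ℂ) * ycoord hA x i) := by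
        rw [mulVec_mulVec, Unitary.coe_star_mul_self, one_mulVec]
      rw [h4, mulVec_zero] at this
      exact this
    have := congrFun h2 i
    simp only [Pi.zero_apply, mul_eq_zero] at this
    rcases this with h3 | h3
    · exact absurd (by exact_mod_cast h3) hi
    · exact h3
  · intro h
    rw [key]
    have : (fun i => (hA.eigenvalues i : ℂ) * ycoord hA x i) = 0 := by
      ext i
      by_cases hi : hA.eigenvalues i = 0
      · simp [hi]
      · simp [h i hi]
    rw [this, mulVec_zero]

/-- the coordinate subspace supported on `p`, pulled back through the eigenbasis -/
noncomputable def eigSpan (hA : A.IsHermitian) (p : ι → Prop) : Submodule ℂ (ι → ℂ) where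
  carrier := {x | ∀ i, ¬ p i → ycoord hA x i = 0}
  add_mem' := by
    intro a b ha hb i hi
    have : ycoord hA (a + b) = ycoord hA a + ycoord hA b := by
      simp [ycoord, mulVec_add]
    rw [this]; simp [ha i hi, hb i hi]
  zero_mem' := by intro i _; simp [ycoord, mulVec_zero]
  smul_mem' := by
    intro c a ha i hi
    have : ycoord hA (c • a) = c • ycoord hA a := by simp [ycoord, mulVec_smul]
    rw [this]; simp [ha i hi]

lemma mem_eigSpan {p : ι → Prop} {x : ι → ℂ} :
    x ∈ eigSpan hA p ↔ ∀ i, ¬ p i → ycoord hA x i = 0 := Iff.rfl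

lemma finrank_eigSpan (p : ι → Prop) [DecidablePred p] :
    Module.finrank ℂ (eigSpan hA p) = Fintype.card {i // p i} := by
  classical
  -- linear equiv to functions on the subtype
  let e : eigSpan hA p ≃ₗ[ℂ] ({i // p i} → ℂ) :=
    { toFun := fun x i => ycoord hA x.1 i.1
      map_add' := by
        intro a b; ext i
        have : ycoord hA (a.1 + b.1) = ycoord hA a.1 + ycoord hA b.1 := by
          simp [ycoord, mulVec_add]
        simp [this]
      map_smul' := by
        intro c a; ext i
        have : ycoord hA (c • a.1) = c • ycoord hA a.1 := by simp [ycoord, mulVec_smul]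
        simp [this]
      invFun := fun f => ⟨(hA.eigenvectorUnitary : Matrix ι ι ℂ) *ᵥ
          (fun i => if h : p i then f ⟨i, h⟩ else 0), by
        intro i hi
        have : ycoord hA ((hA.eigenvectorUnitary : Matrix ι ι ℂ) *ᵥ
            (fun i => if h : p i then f ⟨i, h⟩ else 0)) =
            (fun i => if h : p i then f ⟨i, h⟩ else 0) := by
          rw [ycoord, mulVec_mulVec, Unitary.coe_star_mul_self, one_mulVec]
        rw [this]; simp [hi]⟩
      left_inv := by
        intro x
        apply Subtype.ext
        have hy : ycoord hA ((hA.eigenvectorUnitary : Matrix ι ι ℂ) *ᵥ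
            (fun i => if h : p i then ycoord hA x.1 i else 0)) =
            (fun i => if h : p i then ycoord hA x.1 i else 0) := by
          rw [ycoord, mulVec_mulVec, Unitary.coe_star_mul_self, one_mulVec]
        have : (fun i => if h : p i then ycoord hA x.1 i else 0) = ycoord hA x.1 := by
          ext i
          by_cases h : p i
          · simp [h]
          · simp [h, (x.2 i h).symm]
        simp only [this]
        exact x_eq_U_mulVec hA x.1
      right_inv := by
        intro f
        ext i
        have : ycoord hA ((hA.eigenvectorUnitary : Matrix ι ι ℂ) *ᵥ
            (fun j => if h : p j then f ⟨j, h⟩ else 0)) =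
            (fun j => if h : p j then f ⟨j, h⟩ else 0) := by
          rw [ycoord, mulVec_mulVec, Unitary.coe_star_mul_self, one_mulVec]
        simp only [this]
        simp [i.2] }
  rw [e.finrank_eq, Module.finrank_pi]

noncomputable def qf {ι : Type*} [Fintype ι] (A : Matrix ι ι ℂ) (x : ι → ℂ) : ℝ :=
  (star x ⬝ᵥ A *ᵥ x).re

lemma ycoord_eq_zero_iff {x : ι → ℂ} : ycoord hA x = 0 ↔ x = 0 := by
  constructor
  · intro h
    have := x_eq_U_mulVec hA x
    rw [h, mulVec_zero] at this; exact this.symm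
  · intro h; simp [ycoord, h]

lemma qf_eq_sum_eigen (x : ι → ℂ) :
    qf A x = ∑ i, hA.eigenvalues i * normSq (ycoord hA x i) := by
  have h1 : star x ⬝ᵥ A *ᵥ x =
      star (ycoord hA x) ⬝ᵥ (diagonal (RCLike.ofReal ∘ hA.eigenvalues)) *ᵥ (ycoord hA x) := by
    conv_lhs => rw [hA.spectral_theorem, Unitary.conjStarAlgAut_apply]
    rw [← mulVec_mulVec, ← mulVec_mulVec, dotProduct_mulVec (star x), ← ycoord]
    congr 1
    rw [ycoord, star_mulVec]
    simp [star_eq_conjTranspose]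
  rw [qf, h1]
  rw [dotProduct, Complex.re_sum]
  congr 1; ext i
  rw [mulVec_diagonal]
  have : (starRingEnd ℂ) (ycoord hA x i) * (((hA.eigenvalues i : ℂ)) * ycoord hA x i)
      = (hA.eigenvalues i : ℂ) * ((starRingEnd ℂ) (ycoord hA x i) * ycoord hA x i) := by ring
  simp only [Pi.star_apply, RCLike.star_def, Function.comp_apply]
  rw [show (RCLike.ofReal (hA.eigenvalues i) : ℂ) = ((hA.eigenvalues i : ℝ) : ℂ) from rfl]
  rw [this, ← Complex.normSq_eq_conj_mul_self]
  rw [← Complex.ofReal_mul]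
  exact Complex.ofReal_re _
end master

section char
variable {ι : Type*} [Fintype ι] [DecidableEq ι] {A : Matrix ι ι ℂ} (hA : A.IsHermitian)

lemma qf_pos_on_eigSpan :
    ∀ x ∈ eigSpan hA (fun i => 0 < hA.eigenvalues i), x ≠ 0 → 0 < qf A x := by
  intro x hx hx0
  rw [qf_eq_sum_eigen hA]
  have hy : ycoord hA x ≠ 0 := fun h => hx0 ((ycoord_eq_zero_iff hA).mp h)
  obtain ⟨i, hi⟩ : ∃ i, ycoord hA x i ≠ 0 := by
    by_contra h
    push_neg at h
    exact hy (funext h)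
  have hpi : 0 < hA.eigenvalues i := by
    by_contra h
    exact hi (hx i h)
  refine Finset.sum_pos' (fun j _ => ?_) ⟨i, Finset.mem_univ i, ?_⟩
  · by_cases hj : 0 < hA.eigenvalues j
    · exact mul_nonneg hj.le (Complex.normSq_nonneg _)
    · rw [hx j hj]; simp
  · have : 0 < Complex.normSq (ycoord hA x i) := by
      simpa [Complex.normSq_pos] using hi
    positivity

lemma qf_neg_on_eigSpan :
    ∀ x ∈ eigSpan hA (fun i => hA.eigenvalues i < 0), x ≠ 0 → qf A x < 0 := by
  intro x hx hx0
  rw [qf_eq_sum_eigen hA]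
  have hy : ycoord hA x ≠ 0 := fun h => hx0 ((ycoord_eq_zero_iff hA).mp h)
  obtain ⟨i, hi⟩ : ∃ i, ycoord hA x i ≠ 0 := by
    by_contra h
    push_neg at h
    exact hy (funext h)
  have hpi : hA.eigenvalues i < 0 := by
    by_contra h
    exact hi (hx i h)
  have hpos : 0 < ∑ j, -(hA.eigenvalues j * Complex.normSq (ycoord hA x j)) := by
    refine Finset.sum_pos' (fun j _ => ?_) ⟨i, Finset.mem_univ i, ?_⟩
    · by_cases hj : hA.eigenvalues j < 0
      · have : (0:ℝ) ≤ Complex.normSq (ycoord hA x j) := Complex.normSq_nonneg _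
        nlinarith
      · rw [hx j hj]; simp
    · have h2 : 0 < Complex.normSq (ycoord hA x i) := by
        simpa [Complex.normSq_pos] using hi
      nlinarith
  rw [Finset.sum_neg_distrib] at hpos
  linarith

lemma qf_nonpos_on_eigSpan :
    ∀ x ∈ eigSpan hA (fun i => hA.eigenvalues i ≤ 0), qf A x ≤ 0 := by
  intro x hx
  rw [qf_eq_sum_eigen hA]
  refine Finset.sum_nonpos (fun j _ => ?_)
  by_cases hj : hA.eigenvalues j ≤ 0
  · have : (0:ℝ) ≤ Complex.normSq (ycoord hA x j) := Complex.normSq_nonneg _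
    exact mul_nonpos_of_nonpos_of_nonneg hj this
  · rw [hx j hj]; simp

lemma qf_nonneg_on_eigSpan :
    ∀ x ∈ eigSpan hA (fun i => 0 ≤ hA.eigenvalues i), 0 ≤ qf A x := by
  intro x hx
  rw [qf_eq_sum_eigen hA]
  refine Finset.sum_nonneg (fun j _ => ?_)
  by_cases hj : 0 ≤ hA.eigenvalues j
  · exact mul_nonneg hj (Complex.normSq_nonneg _)
  · rw [hx j hj]; simp

lemma qf_eq_zero_on_nonpos_eigSpan {x : ι → ℂ}
    (hx : x ∈ eigSpan hA (fun i => hA.eigenvalues i ≤ 0)) (h0 : qf A x = 0) :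
    A *ᵥ x = 0 := by
  rw [qf_eq_sum_eigen hA] at h0
  rw [mulVec_eq_zero_iff_ycoord hA]
  intro i hi
  by_contra hyi
  -- all terms nonpositive summing to zero: each is zero
  have hterms : ∀ j ∈ Finset.univ, hA.eigenvalues j * Complex.normSq (ycoord hA x j) ≤ 0 := by
    intro j _
    by_cases hj : hA.eigenvalues j ≤ 0
    · exact mul_nonpos_of_nonpos_of_nonneg hj (Complex.normSq_nonneg _)
    · rw [hx j hj]; simp
  have hzero := (Finset.sum_eq_zero_iff_of_nonpos hterms).mp h0 i (Finset.mem_univ i)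
  have hnsq : Complex.normSq (ycoord hA x i) ≠ 0 := fun h => hyi (Complex.normSq_eq_zero.mp h)
  exact hi (by
    rcases mul_eq_zero.mp hzero with h | h
    · exact h
    · exact absurd h hnsq)

lemma ker_le_nonpos_eigSpan {x : ι → ℂ} (h : A *ᵥ x = 0) :
    x ∈ eigSpan hA (fun i => hA.eigenvalues i ≤ 0) := by
  intro i hi
  exact (mulVec_eq_zero_iff_ycoord hA).mp h i (ne_of_gt (not_le.mp hi))

lemma disjoint_finrank_bound (V N : Submodule ℂ (ι → ℂ))
    (h : ∀ x, x ∈ V → x ∈ N → x = 0) :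
    Module.finrank ℂ V + Module.finrank ℂ N ≤ Fintype.card ι := by
  have hinf : V ⊓ N = ⊥ := by
    rw [Submodule.eq_bot_iff]
    exact fun x hx => h x hx.1 hx.2
  have := Submodule.finrank_sup_add_finrank_inf_eq V N
  rw [hinf] at this
  simp only [finrank_bot, add_zero] at this
  rw [← this]
  have h2 : Module.finrank ℂ ↥(V ⊔ N) ≤ Module.finrank ℂ (ι → ℂ) := Submodule.finrank_le _
  rwa [Module.finrank_pi] at h2

lemma iPos_eq_card : iPos hA = Fintype.card {i // 0 < hA.eigenvalues i} :=
  Nat.card_eq_fintype_card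

lemma iNeg_eq_card : iNeg hA = Fintype.card {i // hA.eigenvalues i < 0} :=
  Nat.card_eq_fintype_card

lemma card_nonpos_eig : Fintype.card {i // hA.eigenvalues i ≤ 0} = Fintype.card ι - iPos hA := by
  rw [iPos_eq_card]
  rw [← Fintype.card_subtype_compl]
  exact Fintype.card_congr (Equiv.subtypeEquivRight fun i => not_lt.symm)

lemma card_nonneg_eig : Fintype.card {i // 0 ≤ hA.eigenvalues i} = Fintype.card ι - iNeg hA := by
  rw [iNeg_eq_card]
  rw [← Fintype.card_subtype_compl]
  exact Fintype.card_congr (Equiv.subtypeEquivRight fun i => not_lt.symm)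

lemma pd_finrank_le_iPos (V : Submodule ℂ (ι → ℂ))
    (hV : ∀ x ∈ V, x ≠ 0 → 0 < qf A x) : Module.finrank ℂ V ≤ iPos hA := by
  have hb := disjoint_finrank_bound V (eigSpan hA (fun i => hA.eigenvalues i ≤ 0)) (by
    intro x hxV hxN
    by_contra hx0
    exact absurd (qf_nonpos_on_eigSpan hA x hxN) (not_le.mpr (hV x hxV hx0)))
  rw [finrank_eigSpan, card_nonpos_eig] at hb
  have hle : iPos hA ≤ Fintype.card ι := by
    rw [iPos_eq_card]; exact Fintype.card_subtype_le _
  omega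

lemma nd_finrank_le_iNeg (V : Submodule ℂ (ι → ℂ))
    (hV : ∀ x ∈ V, x ≠ 0 → qf A x < 0) : Module.finrank ℂ V ≤ iNeg hA := by
  have hb := disjoint_finrank_bound V (eigSpan hA (fun i => 0 ≤ hA.eigenvalues i)) (by
    intro x hxV hxN
    by_contra hx0
    exact absurd (qf_nonneg_on_eigSpan hA x hxN) (not_le.mpr (hV x hxV hx0)))
  rw [finrank_eigSpan, card_nonneg_eig] at hb
  have hle : iNeg hA ≤ Fintype.card ι := by
    rw [iNeg_eq_card]; exact Fintype.card_subtype_le _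
  omega

lemma iPos_add_iNeg_eq_rank : iPos hA + iNeg hA = A.rank := by
  rw [hA.rank_eq_card_non_zero_eigs, iPos_eq_card, iNeg_eq_card]
  have hd : Disjoint (fun i => 0 < hA.eigenvalues i) (fun i => hA.eigenvalues i < 0) := by
    intro r hrp hrq i hi
    exact absurd ((hrq i hi).trans (hrp i hi)) (lt_irrefl _)
  rw [← Fintype.card_subtype_or_disjoint _ _ hd]
  exact Fintype.card_congr (Equiv.subtypeEquivRight fun i =>
    ⟨fun h => h.elim (fun h => h.ne') (fun h => h.ne), fun h => h.lt_or_gt.symm⟩)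
end char
section transfer
variable {ι κ : Type*} [Fintype ι] [DecidableEq ι] [Fintype κ] [DecidableEq κ]

lemma finrank_map_eq_of_inj_on {K V W : Type*} [Field K] [AddCommGroup V] [Module K V]
    [AddCommGroup W] [Module K W] [FiniteDimensional K V]
    (f : V →ₗ[K] W) (p : Submodule K V)
    (h : ∀ x ∈ p, f x = 0 → x = 0) :
    Module.finrank K (p.map f) = Module.finrank K p := by
  have hker : LinearMap.ker (f.comp p.subtype) = ⊥ := by
    rw [Submodule.eq_bot_iff]
    intro x hx
    exact Subtype.ext (h x.1 x.2 hx)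
  have hrange : LinearMap.range (f.comp p.subtype) = p.map f := by
    rw [LinearMap.range_comp, Submodule.range_subtype]
  have := LinearMap.finrank_range_add_finrank_ker (f.comp p.subtype)
  rw [hker, hrange, finrank_bot, add_zero] at this
  exact this

theorem iPos_isGreatest {A : Matrix ι ι ℂ} (hA : A.IsHermitian) :
    IsGreatest {d | ∃ V : Submodule ℂ (ι → ℂ),
      Module.finrank ℂ V = d ∧ ∀ x ∈ V, x ≠ 0 → 0 < qf A x} (iPos hA) := by
  constructor
  · exact ⟨eigSpan hA (fun i => 0 < hA.eigenvalues i),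
      by rw [finrank_eigSpan, iPos_eq_card], qf_pos_on_eigSpan hA⟩
  · rintro d ⟨V, rfl, hV⟩
    exact pd_finrank_le_iPos hA V hV

theorem iNeg_isGreatest {A : Matrix ι ι ℂ} (hA : A.IsHermitian) :
    IsGreatest {d | ∃ V : Submodule ℂ (ι → ℂ),
      Module.finrank ℂ V = d ∧ ∀ x ∈ V, x ≠ 0 → qf A x < 0} (iNeg hA) := by
  constructor
  · exact ⟨eigSpan hA (fun i => hA.eigenvalues i < 0),
      by rw [finrank_eigSpan, iNeg_eq_card], qf_neg_on_eigSpan hA⟩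
  · rintro d ⟨V, rfl, hV⟩
    exact nd_finrank_le_iNeg hA V hV
end transfer

section compactness
variable {ι : Type*} [Fintype ι] [DecidableEq ι]

lemma exists_shift (V : Submodule ℂ (ι → ℂ)) (f g : (ι → ℂ) → ℝ)
    (hf : Continuous f) (hg : Continuous g) (hgnn : ∀ x, 0 ≤ g x)
    (hfh : ∀ (a : ℝ) (x : ι → ℂ), f ((a : ℂ) • x) = a ^ 2 * f x)
    (hgh : ∀ (a : ℝ) (x : ι → ℂ), g ((a : ℂ) • x) = a ^ 2 * g x)
    (h : ∀ x ∈ V, ‖x‖ = 1 → g x = 0 → 0 < f x) :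
    ∃ t : ℝ, 0 ≤ t ∧ ∀ x ∈ V, x ≠ 0 → 0 < f x + t * g x := by
  have key : ∃ t : ℝ, 0 ≤ t ∧ ∀ x ∈ V, ‖x‖ = 1 → 0 < f x + t * g x := by
    set K : Set (ι → ℂ) := {x | x ∈ V ∧ ‖x‖ = 1 ∧ f x ≤ 0} with hK
    have hKclosed : IsClosed K := by
      have h1 : IsClosed (V : Set (ι → ℂ)) := Submodule.closed_of_finiteDimensional V
      have h2 : IsClosed {x : ι → ℂ | ‖x‖ = 1} := isClosed_eq (continuous_norm) continuous_const
      have h3 : IsClosed {x : ι → ℂ | f x ≤ 0} := isClosed_le hf continuous_const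
      exact (h1.inter (h2.inter h3))
    have hKbdd : Bornology.IsBounded K := by
      apply Bornology.IsBounded.subset (Metric.isBounded_closedBall (x := (0 : ι → ℂ)) (r := 1))
      intro x hx
      simp only [Metric.mem_closedBall, dist_zero_right]
      exact le_of_eq hx.2.1
    have hKcompact : IsCompact K := Metric.isCompact_of_isClosed_isBounded hKclosed hKbdd
    rcases Set.eq_empty_or_nonempty K with hKe | hKne
    · refine ⟨0, le_refl 0, fun x hx hn => ?_⟩
      have : x ∉ K := by rw [hKe]; exact Set.notMem_empty x
      simp only [hK, Set.mem_setOf_eq, not_and, not_le] at this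
      simpa using this hx hn
    · obtain ⟨x₀, hx₀K, hmin₀⟩ := hKcompact.exists_isMinOn hKne hg.continuousOn
      obtain ⟨x₁, hx₁K, hmin₁⟩ := hKcompact.exists_isMinOn hKne hf.continuousOn
      have hε : 0 < g x₀ := by
        rcases lt_or_eq_of_le (hgnn x₀) with h' | h'
        · exact h'
        · exact absurd (h x₀ hx₀K.1 hx₀K.2.1 h'.symm) (not_lt.mpr hx₀K.2.2)
      have hc : f x₁ ≤ 0 := hx₁K.2.2
      have hdnn : 0 ≤ (1 - f x₁) / g x₀ := div_nonneg (by linarith) hε.le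
      refine ⟨(1 - f x₁) / g x₀, hdnn, fun x hx hn => ?_⟩
      by_cases hfx : 0 < f x
      · have : 0 ≤ (1 - f x₁) / g x₀ * g x := mul_nonneg hdnn (hgnn x)
        linarith
      · have hxK : x ∈ K := ⟨hx, hn, not_lt.mp hfx⟩
        have h1 : g x₀ ≤ g x := hmin₀ hxK
        have h2 : f x₁ ≤ f x := hmin₁ hxK
        have h3 : (1 - f x₁) / g x₀ * g x₀ ≤ (1 - f x₁) / g x₀ * g x := by
          exact mul_le_mul_of_nonneg_left h1 hdnn
        rw [div_mul_cancel₀ _ (ne_of_gt hε)] at h3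
        linarith
  obtain ⟨t, ht0, ht⟩ := key
  refine ⟨t, ht0, fun x hx hn => ?_⟩
  have hnx : (0:ℝ) < ‖x‖ := norm_pos_iff.mpr hn
  set u : ι → ℂ := ((‖x‖⁻¹ : ℝ) : ℂ) • x with hu
  have huV : u ∈ V := V.smul_mem _ hx
  have hun : ‖u‖ = 1 := by
    rw [hu, norm_smul]
    simp [abs_of_pos (inv_pos.mpr hnx), inv_mul_cancel₀ (ne_of_gt hnx)]
  have := ht u huV hun
  have hxu : ((‖x‖ : ℝ) : ℂ) • u = x := by
    rw [hu, smul_smul, ← Complex.ofReal_mul, mul_inv_cancel₀ (ne_of_gt hnx)]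
    simp
  have hfx : f x = ‖x‖ ^ 2 * f u := by
    have h5 := hfh ‖x‖ u
    rwa [hxu] at h5
  have hgx : g x = ‖x‖ ^ 2 * g u := by
    have h5 := hgh ‖x‖ u
    rwa [hxu] at h5
  rw [hfx, hgx]
  nlinarith [mul_pos (pow_pos hnx 2) this]
end compactness
section qfutil
variable {ι κ : Type*} [Fintype ι] [DecidableEq ι] [Fintype κ] [DecidableEq κ]

lemma qf_continuous (A : Matrix ι ι ℂ) : Continuous (qf A) := by
  have h1 : Continuous fun x : ι → ℂ => star x ⬝ᵥ A *ᵥ x := by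
    unfold dotProduct mulVec
    refine continuous_finset_sum _ fun i _ => Continuous.mul ?_ ?_
    · exact continuous_star.comp (continuous_apply i)
    · exact continuous_finset_sum _ fun j _ => continuous_const.mul (continuous_apply j)
  exact Complex.continuous_re.comp h1

lemma qf_smul (A : Matrix ι ι ℂ) (a : ℝ) (x : ι → ℂ) :
    qf A ((a : ℂ) • x) = a ^ 2 * qf A x := by
  unfold qf
  have : star ((a:ℂ) • x) ⬝ᵥ A *ᵥ ((a:ℂ) • x) = ((a:ℂ) * (a:ℂ)) * (star x ⬝ᵥ A *ᵥ x) := by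
    rw [star_smul, mulVec_smul, smul_dotProduct, dotProduct_smul]
    simp [smul_smul, Complex.star_def, Complex.conj_ofReal]
    ring
  rw [this]
  have : ((a:ℂ) * (a:ℂ)) = ((a^2 : ℝ) : ℂ) := by push_cast; ring
  rw [this, Complex.re_ofReal_mul]

lemma qf_sub (A B : Matrix ι ι ℂ) (x : ι → ℂ) : qf (A - B) x = qf A x - qf B x := by
  unfold qf
  rw [sub_mulVec, dotProduct_sub, Complex.sub_re]

lemma qf_smul_matrix (A : Matrix ι ι ℂ) (t : ℝ) (x : ι → ℂ) :
    qf ((t : ℂ) • A) x = t * qf A x := by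
  unfold qf
  rw [smul_mulVec, dotProduct_smul]
  simp [smul_eq_mul, Complex.re_ofReal_mul]

lemma qf_conj_factor (B : Matrix ι κ ℂ) (v : ι → ℂ) :
    qf (B * Bᴴ) v = ∑ j, Complex.normSq ((Bᴴ *ᵥ v) j) := by
  unfold qf
  rw [← mulVec_mulVec, dotProduct_mulVec]
  rw [show star v ᵥ* B = star (Bᴴ *ᵥ v) by rw [star_mulVec, conjTranspose_conjTranspose]]
  rw [dotProduct, Complex.re_sum]
  congr 1; ext j
  simp only [Pi.star_apply, RCLike.star_def]
  rw [← Complex.normSq_eq_conj_mul_self]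
  simp

lemma qf_conj_factor_nonneg (B : Matrix ι κ ℂ) (v : ι → ℂ) : 0 ≤ qf (B * Bᴴ) v := by
  rw [qf_conj_factor]
  exact Finset.sum_nonneg fun j _ => Complex.normSq_nonneg _

lemma qf_conj_factor_eq_zero {B : Matrix ι κ ℂ} {v : ι → ℂ} (h : qf (B * Bᴴ) v = 0) :
    Bᴴ *ᵥ v = 0 := by
  rw [qf_conj_factor] at h
  ext j
  have := (Finset.sum_eq_zero_iff_of_nonneg (fun j _ => Complex.normSq_nonneg ((Bᴴ *ᵥ v) j))).mp
    h j (Finset.mem_univ j)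
  simpa [Complex.normSq_eq_zero] using this

/-- quadratic form of a 2x2 block Hermitian-bordered matrix -/
lemma qf_sum_elim (A : Matrix ι ι ℂ) (B : Matrix ι κ ℂ) (v : ι → ℂ) (u : κ → ℂ) :
    qf (fromBlocks A B Bᴴ (0 : Matrix κ κ ℂ)) (Sum.elim v u) =
      qf A v + 2 * (star v ⬝ᵥ B *ᵥ u).re := by
  have hstar : star (Sum.elim v u) = Sum.elim (star v) (star u) := by ext (i | j) <;> rfl
  unfold qf
  rw [fromBlocks_mulVec, hstar, sumElim_dotProduct_sumElim]
  simp only [Sum.elim_comp_inl, Sum.elim_comp_inr, zero_mulVec, add_zero]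
  have hcc : star u ⬝ᵥ Bᴴ *ᵥ v = star (star v ⬝ᵥ B *ᵥ u) := by
    rw [dotProduct_mulVec, ← star_mulVec, star_dotProduct]
  rw [dotProduct_add, hcc]
  simp only [Complex.add_re]
  rw [Complex.star_def, Complex.conj_re]
  ring

lemma sum_elim_comp (x : ι ⊕ κ → ℂ) : Sum.elim (x ∘ Sum.inl) (x ∘ Sum.inr) = x := by
  ext (i | j) <;> rfl

lemma cross_term_smul (B : Matrix ι κ ℂ) (v : ι → ℂ) (a : ℝ) :
    (star v ⬝ᵥ B *ᵥ ((a : ℂ) • (Bᴴ *ᵥ v))).re = a * qf (B * Bᴴ) v := by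
  rw [mulVec_smul, dotProduct_smul]
  have : qf (B * Bᴴ) v = (star v ⬝ᵥ B *ᵥ (Bᴴ *ᵥ v)).re := by
    unfold qf; rw [← mulVec_mulVec]
  rw [this]
  simp [smul_eq_mul, Complex.re_ofReal_mul]

lemma cross_term_mulmat (X : Matrix κ κ ℂ) (B : Matrix ι κ ℂ) (v : ι → ℂ) (a : ℂ) :
    star v ⬝ᵥ B *ᵥ (a • ((X * Bᴴ) *ᵥ v)) = a * (star v ⬝ᵥ (B * X * Bᴴ) *ᵥ v) := by
  rw [mulVec_smul, dotProduct_smul, ← mulVec_mulVec, ← mulVec_mulVec]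
  simp [smul_eq_mul, Matrix.mul_assoc]

end qfutil
section main
variable {ι κ : Type*} [Fintype ι] [DecidableEq ι] [Fintype κ] [DecidableEq κ]

lemma hermBXB (B : Matrix ι κ ℂ) {X : Matrix κ κ ℂ} (hX : X.IsHermitian) :
    (B * X * Bᴴ).IsHermitian := by
  unfold Matrix.IsHermitian
  rw [conjTranspose_mul, conjTranspose_mul, conjTranspose_conjTranspose, hX.eq,
    Matrix.mul_assoc]

/-- the bordered embedding `v ↦ (v, W v)` -/
noncomputable def elimMap (W : Matrix κ ι ℂ) : ((ι → ℂ) →ₗ[ℂ] (ι ⊕ κ → ℂ)) where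
  toFun v := Sum.elim v (W *ᵥ v)
  map_add' v w := by
    ext (i | j)
    · rfl
    · simp [mulVec_add]
  map_smul' c v := by
    ext (i | j)
    · rfl
    · simp [mulVec_smul]

lemma elimMap_inj (W : Matrix κ ι ℂ) {v : ι → ℂ} (h : elimMap W v = 0) : v = 0 := by
  ext i
  exact congrFun h (Sum.inl i)

lemma qf_elim_formula (A : Matrix ι ι ℂ) (B : Matrix ι κ ℂ) (X : Matrix κ κ ℂ) (s : ℝ)
    (v : ι → ℂ) :
    qf (fromBlocks A B Bᴴ (0 : Matrix κ κ ℂ))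
      (elimMap ((((-(1/2) : ℝ) : ℂ)) • (X * Bᴴ) + ((s : ℝ) : ℂ) • Bᴴ) v)
      = qf (A - B * X * Bᴴ) v + 2 * s * qf (B * Bᴴ) v := by
  have hW : ((((-(1/2) : ℝ) : ℂ)) • (X * Bᴴ) + ((s : ℝ) : ℂ) • Bᴴ) *ᵥ v
      = (((-(1/2) : ℝ) : ℂ)) • ((X * Bᴴ) *ᵥ v) + ((s : ℝ) : ℂ) • (Bᴴ *ᵥ v) := by
    rw [add_mulVec, smul_mulVec, smul_mulVec]
  show qf _ (Sum.elim v _) = _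
  rw [hW, qf_sum_elim]
  rw [mulVec_add, dotProduct_add]
  rw [cross_term_mulmat, Complex.add_re]
  rw [cross_term_smul]
  have h2 : ((((-(1/2) : ℝ) : ℂ)) * (star v ⬝ᵥ (B * X * Bᴴ) *ᵥ v)).re
      = (-(1/2) : ℝ) * qf (B * X * Bᴴ) v := by
    rw [Complex.re_ofReal_mul]; rfl
  rw [h2, qf_sub]
  ring

/-- transfer: positives of the perturbed matrix are at most those of the bordered matrix -/
lemma iPos_le_iPos_M {A : Matrix ι ι ℂ} {B : Matrix ι κ ℂ} (X : Matrix κ κ ℂ)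
    (h : (A - B * X * Bᴴ).IsHermitian)
    (hM : (fromBlocks A B Bᴴ (0 : Matrix κ κ ℂ)).IsHermitian) :
    iPos h ≤ iPos hM := by
  obtain ⟨V, hVrank, hVpd⟩ := (iPos_isGreatest h).1
  refine (iPos_isGreatest hM).2 ⟨(V.map (elimMap ((((-(1/2) : ℝ) : ℂ)) • (X * Bᴴ)
    + ((0 : ℝ) : ℂ) • Bᴴ))), ?_, ?_⟩
  · rw [finrank_map_eq_of_inj_on _ _ (fun x _ hx => elimMap_inj _ hx), hVrank]
  · rintro x hx hx0
    obtain ⟨v, hvV, rfl⟩ := Submodule.mem_map.mp hx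
    have hv0 : v ≠ 0 := fun h' => hx0 (by rw [h']; exact (elimMap _).map_zero)
    have := qf_elim_formula A B X 0 v
    rw [this]
    have := hVpd v hvV hv0
    simp only [mul_zero, zero_mul, add_zero]
    linarith

lemma iNeg_le_iNeg_M {A : Matrix ι ι ℂ} {B : Matrix ι κ ℂ} (X : Matrix κ κ ℂ)
    (h : (A - B * X * Bᴴ).IsHermitian)
    (hM : (fromBlocks A B Bᴴ (0 : Matrix κ κ ℂ)).IsHermitian) :
    iNeg h ≤ iNeg hM := by
  obtain ⟨V, hVrank, hVpd⟩ := (iNeg_isGreatest h).1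
  refine (iNeg_isGreatest hM).2 ⟨(V.map (elimMap ((((-(1/2) : ℝ) : ℂ)) • (X * Bᴴ)
    + ((0 : ℝ) : ℂ) • Bᴴ))), ?_, ?_⟩
  · rw [finrank_map_eq_of_inj_on _ _ (fun x _ hx => elimMap_inj _ hx), hVrank]
  · rintro x hx hx0
    obtain ⟨v, hvV, rfl⟩ := Submodule.mem_map.mp hx
    have hv0 : v ≠ 0 := fun h' => hx0 (by rw [h']; exact (elimMap _).map_zero)
    have := qf_elim_formula A B X 0 v
    rw [this]
    have := hVpd v hvV hv0
    simp only [mul_zero, zero_mul, add_zero]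
    linarith
end main
section main2
variable {ι κ : Type*} [Fintype ι] [DecidableEq ι] [Fintype κ] [DecidableEq κ]

lemma qf_fromBlocks_eq (A : Matrix ι ι ℂ) (B : Matrix ι κ ℂ) (x : ι ⊕ κ → ℂ) :
    qf (fromBlocks A B Bᴴ (0 : Matrix κ κ ℂ)) x
      = qf A (x ∘ Sum.inl) + 2 * (star (x ∘ Sum.inl) ⬝ᵥ B *ᵥ (x ∘ Sum.inr)).re := by
  conv_lhs => rw [← sum_elim_comp x]
  exact qf_sum_elim A B _ _

lemma qf_zero_vec (A : Matrix ι ι ℂ) : qf A (0 : ι → ℂ) = 0 := by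
  unfold qf
  simp

lemma cross_vanish {B : Matrix ι κ ℂ} {v : ι → ℂ} (h : Bᴴ *ᵥ v = 0) (u : κ → ℂ) :
    star v ⬝ᵥ B *ᵥ u = 0 := by
  rw [dotProduct_mulVec,
    show star v ᵥ* B = star (Bᴴ *ᵥ v) by rw [star_mulVec, conjTranspose_conjTranspose], h]
  simp

lemma smul_one_hermitian (t : ℝ) : (((t : ℝ) : ℂ) • (1 : Matrix κ κ ℂ)).IsHermitian := by
  unfold Matrix.IsHermitian
  rw [conjTranspose_smul, conjTranspose_one, Complex.star_def, Complex.conj_ofReal]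

lemma B_smul_one_B (B : Matrix ι κ ℂ) (t : ℝ) :
    B * (((t : ℝ) : ℂ) • (1 : Matrix κ κ ℂ)) * Bᴴ = ((t : ℝ) : ℂ) • (B * Bᴴ) := by
  rw [Matrix.mul_smul, Matrix.mul_one, Matrix.smul_mul]

lemma exists_max_pos {A : Matrix ι ι ℂ} {B : Matrix ι κ ℂ} (hA : A.IsHermitian)
    (hM : (fromBlocks A B Bᴴ (0 : Matrix κ κ ℂ)).IsHermitian) :
    ∃ (X : Matrix κ κ ℂ) (_ : X.IsHermitian) (h : (A - B * X * Bᴴ).IsHermitian),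
      iPos h = iPos hM := by
  obtain ⟨Vm, hVmrank, hVmpd⟩ := (iPos_isGreatest hM).1
  set L1 : (ι ⊕ κ → ℂ) →ₗ[ℂ] (ι → ℂ) := LinearMap.funLeft ℂ ℂ Sum.inl with hL1
  have hinj : ∀ x ∈ Vm, L1 x = 0 → x = 0 := by
    intro x hx h0
    by_contra hne
    have hq := hVmpd x hx hne
    rw [qf_fromBlocks_eq] at hq
    have hxl : x ∘ Sum.inl = 0 := h0
    rw [hxl, qf_zero_vec] at hq
    simp at hq
  set V := Vm.map L1 with hV
  have hVdim : Module.finrank ℂ V = iPos hM := by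
    rw [finrank_map_eq_of_inj_on _ _ hinj, hVmrank]
  have hhyp : ∀ v ∈ V, ‖v‖ = 1 → qf (B * Bᴴ) v = 0 → 0 < qf A v := by
    intro v hvV hn hg0
    obtain ⟨x, hxVm, rfl⟩ := Submodule.mem_map.mp hvV
    have hBv : Bᴴ *ᵥ (L1 x) = 0 := qf_conj_factor_eq_zero hg0
    have hx0 : x ≠ 0 := by
      intro h'
      rw [h'] at hn
      simp at hn
    have hq := hVmpd x hxVm hx0
    rw [qf_fromBlocks_eq] at hq
    rw [show x ∘ Sum.inl = L1 x from rfl, cross_vanish hBv] at hq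
    simpa using hq
  obtain ⟨t, ht0, ht⟩ := exists_shift V (qf A) (qf (B * Bᴴ)) (qf_continuous A)
    (qf_continuous _) (qf_conj_factor_nonneg B) (qf_smul A) (qf_smul _) hhyp
  refine ⟨((-t : ℝ) : ℂ) • (1 : Matrix κ κ ℂ), smul_one_hermitian (-t), ?_, ?_⟩
  · exact hA.sub (hermBXB B (smul_one_hermitian (-t)))
  · set X := ((-t : ℝ) : ℂ) • (1 : Matrix κ κ ℂ)
    have h : (A - B * X * Bᴴ).IsHermitian := hA.sub (hermBXB B (smul_one_hermitian (-t)))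
    have hqC : ∀ v, qf (A - B * X * Bᴴ) v = qf A v + t * qf (B * Bᴴ) v := by
      intro v
      rw [qf_sub, B_smul_one_B, qf_smul_matrix]
      ring
    refine le_antisymm (iPos_le_iPos_M X h hM) ?_
    refine (iPos_isGreatest h).2 ⟨V, hVdim, ?_⟩
    intro v hvV hv0
    rw [hqC]
    exact ht v hvV hv0

lemma exists_max_neg {A : Matrix ι ι ℂ} {B : Matrix ι κ ℂ} (hA : A.IsHermitian)
    (hM : (fromBlocks A B Bᴴ (0 : Matrix κ κ ℂ)).IsHermitian) :
    ∃ (X : Matrix κ κ ℂ) (_ : X.IsHermitian) (h : (A - B * X * Bᴴ).IsHermitian),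
      iNeg h = iNeg hM := by
  obtain ⟨Vm, hVmrank, hVmpd⟩ := (iNeg_isGreatest hM).1
  set L1 : (ι ⊕ κ → ℂ) →ₗ[ℂ] (ι → ℂ) := LinearMap.funLeft ℂ ℂ Sum.inl with hL1
  have hinj : ∀ x ∈ Vm, L1 x = 0 → x = 0 := by
    intro x hx h0
    by_contra hne
    have hq := hVmpd x hx hne
    rw [qf_fromBlocks_eq] at hq
    have hxl : x ∘ Sum.inl = 0 := h0
    rw [hxl, qf_zero_vec] at hq
    simp at hq
  set V := Vm.map L1 with hV
  have hVdim : Module.finrank ℂ V = iNeg hM := by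
    rw [finrank_map_eq_of_inj_on _ _ hinj, hVmrank]
  have hhyp : ∀ v ∈ V, ‖v‖ = 1 → qf (B * Bᴴ) v = 0 → 0 < -(qf A v) := by
    intro v hvV hn hg0
    obtain ⟨x, hxVm, rfl⟩ := Submodule.mem_map.mp hvV
    have hBv : Bᴴ *ᵥ (L1 x) = 0 := qf_conj_factor_eq_zero hg0
    have hx0 : x ≠ 0 := by
      intro h'
      rw [h'] at hn
      simp at hn
    have hq := hVmpd x hxVm hx0
    rw [qf_fromBlocks_eq] at hq
    rw [show x ∘ Sum.inl = L1 x from rfl, cross_vanish hBv] at hq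
    simp at hq
    linarith
  obtain ⟨t, ht0, ht⟩ := exists_shift V (fun v => -(qf A v)) (qf (B * Bᴴ))
    ((qf_continuous A).neg) (qf_continuous _) (qf_conj_factor_nonneg B)
    (fun a x => by show -qf A ((a:ℂ)•x) = a^2 * -(qf A x); rw [qf_smul]; ring) (qf_smul _) hhyp
  refine ⟨((t : ℝ) : ℂ) • (1 : Matrix κ κ ℂ), smul_one_hermitian t, ?_, ?_⟩
  · exact hA.sub (hermBXB B (smul_one_hermitian t))
  · set X := ((t : ℝ) : ℂ) • (1 : Matrix κ κ ℂ)
    have h : (A - B * X * Bᴴ).IsHermitian := hA.sub (hermBXB B (smul_one_hermitian t))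
    have hqC : ∀ v, qf (A - B * X * Bᴴ) v = qf A v - t * qf (B * Bᴴ) v := by
      intro v
      rw [qf_sub, B_smul_one_B, qf_smul_matrix]
    refine le_antisymm (iNeg_le_iNeg_M X h hM) ?_
    refine (iNeg_isGreatest h).2 ⟨V, hVdim, ?_⟩
    intro v hvV hv0
    rw [hqC]
    have := ht v hvV hv0
    linarith
end main2
section lowerbound
variable {ι κ : Type*} [Fintype ι] [DecidableEq ι] [Fintype κ] [DecidableEq κ]

lemma qf_eq_zero_on_nonneg_eigSpan {A : Matrix ι ι ℂ} (hA : A.IsHermitian) {x : ι → ℂ}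
    (hx : x ∈ eigSpan hA (fun i => 0 ≤ hA.eigenvalues i)) (h0 : qf A x = 0) :
    A *ᵥ x = 0 := by
  rw [qf_eq_sum_eigen hA] at h0
  rw [mulVec_eq_zero_iff_ycoord hA]
  intro i hi
  by_contra hyi
  have hterms : ∀ j ∈ Finset.univ, (0:ℝ) ≤ hA.eigenvalues j * Complex.normSq (ycoord hA x j) := by
    intro j _
    by_cases hj : 0 ≤ hA.eigenvalues j
    · exact mul_nonneg hj (Complex.normSq_nonneg _)
    · rw [hx j hj]; simp
  have hzero := (Finset.sum_eq_zero_iff_of_nonneg hterms).mp h0 i (Finset.mem_univ i)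
  have hnsq : Complex.normSq (ycoord hA x i) ≠ 0 := fun h => hyi (Complex.normSq_eq_zero.mp h)
  exact hi (by
    rcases mul_eq_zero.mp hzero with h | h
    · exact h
    · exact absurd h hnsq)

lemma ker_le_nonneg_eigSpan {A : Matrix ι ι ℂ} (hA : A.IsHermitian) {x : ι → ℂ}
    (h : A *ᵥ x = 0) : x ∈ eigSpan hA (fun i => 0 ≤ hA.eigenvalues i) := by
  intro i hi
  exact (mulVec_eq_zero_iff_ycoord hA).mp h i (ne_of_lt (not_le.mp hi))

lemma rank_fromColumns_eq {A : Matrix ι ι ℂ} {B : Matrix ι κ ℂ} (X : Matrix κ κ ℂ) :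
    (fromCols A B).rank = (fromCols (A - B * X * Bᴴ) B).rank := by
  have e1 : fromCols (A - B * X * Bᴴ) B
      = fromCols A B * fromBlocks (1 : Matrix ι ι ℂ) 0 (-(X * Bᴴ)) (1 : Matrix κ κ ℂ) := by
    rw [Matrix.fromCols_mul_fromBlocks]
    simp only [Matrix.mul_one, Matrix.mul_zero, zero_add, Matrix.mul_neg, Matrix.mul_assoc,
      sub_eq_add_neg]
  have e2 : fromCols A B
      = fromCols (A - B * X * Bᴴ) B * fromBlocks (1 : Matrix ι ι ℂ) 0 (X * Bᴴ) (1 : Matrix κ κ ℂ) := by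
    rw [Matrix.fromCols_mul_fromBlocks]
    simp only [Matrix.mul_one, Matrix.mul_zero, zero_add, Matrix.mul_assoc]
    rw [← Matrix.mul_assoc, sub_add_cancel]
  refine le_antisymm ?_ ?_
  · rw [e2]; exact rank_mul_le_left _ _
  · rw [e1]; exact rank_mul_le_left _ _

lemma rank_add_ker {C : Matrix ι ι ℂ} (hC : C.IsHermitian) (B : Matrix ι κ ℂ) :
    (fromCols C B).rank
      + Module.finrank ℂ (LinearMap.ker (fromRows C Bᴴ).mulVecLin) = Fintype.card ι := by
  have h1 : (fromCols C B).rank = (fromRows C Bᴴ).rank := by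
    rw [← rank_conjTranspose (fromCols C B),
      conjTranspose_fromCols_eq_fromRows_conjTranspose, hC.eq]
  rw [h1]
  have := LinearMap.finrank_range_add_finrank_ker (fromRows C Bᴴ).mulVecLin
  rw [Module.finrank_pi] at this
  exact this

lemma mem_ker_fromRows {C : Matrix ι ι ℂ} {B : Matrix ι κ ℂ} {x : ι → ℂ} :
    x ∈ LinearMap.ker (fromRows C Bᴴ).mulVecLin ↔ C *ᵥ x = 0 ∧ Bᴴ *ᵥ x = 0 := by
  rw [LinearMap.mem_ker, mulVecLin_apply, fromRows_mulVec]
  constructor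
  · intro h
    constructor
    · ext i; exact congrFun h (Sum.inl i)
    · ext j; exact congrFun h (Sum.inr j)
  · rintro ⟨h1, h2⟩
    ext (i | j)
    · exact congrFun h1 i
    · exact congrFun h2 j

lemma rank_le_iPos_add_iNeg_M {A : Matrix ι ι ℂ} {B : Matrix ι κ ℂ}
    (hM : (fromBlocks A B Bᴴ (0 : Matrix κ κ ℂ)).IsHermitian)
    (X : Matrix κ κ ℂ) (h : (A - B * X * Bᴴ).IsHermitian) :
    (fromCols A B).rank ≤ iPos h + iNeg hM := by
  set K := LinearMap.ker (fromRows (A - B * X * Bᴴ) Bᴴ).mulVecLin with hKdef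
  set S := eigSpan h (fun i => h.eigenvalues i ≤ 0) with hSdef
  have hKS : K ≤ S := fun x hx => ker_le_nonpos_eigSpan h (mem_ker_fromRows.mp hx).1
  set K₀ := K.comap S.subtype with hK₀def
  obtain ⟨T', hT'⟩ := Submodule.exists_isCompl K₀
  set T := T'.map S.subtype with hTdef
  have hfr1 : Module.finrank ℂ K₀ + Module.finrank ℂ T' = Module.finrank ℂ S :=
    Submodule.finrank_add_eq_of_isCompl hT'
  have hsub_inj : ∀ y ∈ T', S.subtype y = 0 → y = 0 := by
    intro y _ hy
    exact Subtype.ext hy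
  have hfrT : Module.finrank ℂ T = Module.finrank ℂ T' :=
    finrank_map_eq_of_inj_on _ _ hsub_inj
  have hmapK : K₀.map S.subtype = K := by
    rw [hK₀def, Submodule.map_comap_subtype, inf_eq_right.mpr hKS]
  have hfrK : Module.finrank ℂ K₀ = Module.finrank ℂ K := by
    rw [← hmapK]
    exact (finrank_map_eq_of_inj_on _ _ (fun y _ hy => Subtype.ext hy)).symm
  have hTK : ∀ x ∈ T, x ∈ K → x = (0 : ι → ℂ) := by
    rintro x hx hxK
    obtain ⟨x', hx'T, rfl⟩ := Submodule.mem_map.mp hx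
    have hx'K : x' ∈ K₀ := hxK
    have : x' ∈ K₀ ⊓ T' := ⟨hx'K, hx'T⟩
    rw [hT'.inf_eq_bot] at this
    rw [this]
    rfl
  have hTS : ∀ x ∈ T, x ∈ S := by
    rintro x hx
    obtain ⟨x', _, rfl⟩ := Submodule.mem_map.mp hx
    exact x'.2
  have hhyp : ∀ v ∈ T, ‖v‖ = 1 → qf (B * Bᴴ) v = 0 → 0 < -(qf (A - B * X * Bᴴ) v) := by
    intro v hvT hn hg
    have hvS := hTS v hvT
    have hle := qf_nonpos_on_eigSpan h v hvS
    rcases lt_or_eq_of_le hle with h' | h'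
    · linarith
    · exfalso
      have hCv : (A - B * X * Bᴴ) *ᵥ v = 0 := qf_eq_zero_on_nonpos_eigSpan h hvS h'
      have hBv : Bᴴ *ᵥ v = 0 := qf_conj_factor_eq_zero hg
      have : v = 0 := hTK v hvT (mem_ker_fromRows.mpr ⟨hCv, hBv⟩)
      rw [this] at hn
      simp at hn
  obtain ⟨s, hs0, hs⟩ := exists_shift T (fun v => -(qf (A - B * X * Bᴴ) v)) (qf (B * Bᴴ))
    ((qf_continuous (A - B * X * Bᴴ)).neg) (qf_continuous _) (qf_conj_factor_nonneg B)
    (fun a x => by show -qf (A - B * X * Bᴴ) ((a:ℂ)•x) = a^2 * -(qf (A - B * X * Bᴴ) x); rw [qf_smul]; ring)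
    (qf_smul _) hhyp
  -- map T into a negative subspace of M
  have hND : Module.finrank ℂ T ≤ iNeg hM := by
    refine (iNeg_isGreatest hM).2 ⟨T.map (elimMap ((((-(1/2) : ℝ) : ℂ)) • (X * Bᴴ)
      + (((-s/2 : ℝ)) : ℂ) • Bᴴ)), ?_, ?_⟩
    · exact finrank_map_eq_of_inj_on _ _ (fun x _ hx => elimMap_inj _ hx)
    · rintro x hx hx0
      obtain ⟨v, hvT, rfl⟩ := Submodule.mem_map.mp hx
      have hv0 : v ≠ 0 := fun h' => hx0 (by rw [h']; exact (elimMap _).map_zero)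
      have hform := qf_elim_formula A B X (-s/2) v
      rw [hform]
      have := hs v hvT hv0
      linarith
  -- cardinal bookkeeping
  have hfrS : Module.finrank ℂ S = Fintype.card ι - iPos h := by
    rw [hSdef, finrank_eigSpan, card_nonpos_eig]
  have hiPle : iPos h ≤ Fintype.card ι := by
    rw [iPos_eq_card]; exact Fintype.card_subtype_le _
  have hrank := rank_add_ker h B
  have hre := rank_fromColumns_eq (A := A) (B := B) X
  rw [← hKdef] at hrank
  omega

lemma rank_le_iNeg_add_iPos_M {A : Matrix ι ι ℂ} {B : Matrix ι κ ℂ}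
    (hM : (fromBlocks A B Bᴴ (0 : Matrix κ κ ℂ)).IsHermitian)
    (X : Matrix κ κ ℂ) (h : (A - B * X * Bᴴ).IsHermitian) :
    (fromCols A B).rank ≤ iNeg h + iPos hM := by
  set K := LinearMap.ker (fromRows (A - B * X * Bᴴ) Bᴴ).mulVecLin with hKdef
  set S := eigSpan h (fun i => 0 ≤ h.eigenvalues i) with hSdef
  have hKS : K ≤ S := fun x hx => ker_le_nonneg_eigSpan h (mem_ker_fromRows.mp hx).1
  set K₀ := K.comap S.subtype with hK₀def
  obtain ⟨T', hT'⟩ := Submodule.exists_isCompl K₀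
  set T := T'.map S.subtype with hTdef
  have hfr1 : Module.finrank ℂ K₀ + Module.finrank ℂ T' = Module.finrank ℂ S :=
    Submodule.finrank_add_eq_of_isCompl hT'
  have hfrT : Module.finrank ℂ T = Module.finrank ℂ T' :=
    finrank_map_eq_of_inj_on _ _ (fun y _ hy => Subtype.ext hy)
  have hmapK : K₀.map S.subtype = K := by
    rw [hK₀def, Submodule.map_comap_subtype, inf_eq_right.mpr hKS]
  have hfrK : Module.finrank ℂ K₀ = Module.finrank ℂ K := by
    rw [← hmapK]
    exact (finrank_map_eq_of_inj_on _ _ (fun y _ hy => Subtype.ext hy)).symm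
  have hTK : ∀ x ∈ T, x ∈ K → x = (0 : ι → ℂ) := by
    rintro x hx hxK
    obtain ⟨x', hx'T, rfl⟩ := Submodule.mem_map.mp hx
    have hx'K : x' ∈ K₀ := hxK
    have : x' ∈ K₀ ⊓ T' := ⟨hx'K, hx'T⟩
    rw [hT'.inf_eq_bot] at this
    rw [this]
    rfl
  have hTS : ∀ x ∈ T, x ∈ S := by
    rintro x hx
    obtain ⟨x', _, rfl⟩ := Submodule.mem_map.mp hx
    exact x'.2
  have hhyp : ∀ v ∈ T, ‖v‖ = 1 → qf (B * Bᴴ) v = 0 → 0 < qf (A - B * X * Bᴴ) v := by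
    intro v hvT hn hg
    have hvS := hTS v hvT
    have hle := qf_nonneg_on_eigSpan h v hvS
    rcases lt_or_eq_of_le hle with h' | h'
    · linarith
    · exfalso
      have hCv : (A - B * X * Bᴴ) *ᵥ v = 0 := qf_eq_zero_on_nonneg_eigSpan h hvS h'.symm
      have hBv : Bᴴ *ᵥ v = 0 := qf_conj_factor_eq_zero hg
      have : v = 0 := hTK v hvT (mem_ker_fromRows.mpr ⟨hCv, hBv⟩)
      rw [this] at hn
      simp at hn
  obtain ⟨s, hs0, hs⟩ := exists_shift T (qf (A - B * X * Bᴴ)) (qf (B * Bᴴ))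
    (qf_continuous (A - B * X * Bᴴ)) (qf_continuous _) (qf_conj_factor_nonneg B)
    (qf_smul (A - B * X * Bᴴ)) (qf_smul _) hhyp
  have hPD : Module.finrank ℂ T ≤ iPos hM := by
    refine (iPos_isGreatest hM).2 ⟨T.map (elimMap ((((-(1/2) : ℝ) : ℂ)) • (X * Bᴴ)
      + (((s/2 : ℝ)) : ℂ) • Bᴴ)), ?_, ?_⟩
    · exact finrank_map_eq_of_inj_on _ _ (fun x _ hx => elimMap_inj _ hx)
    · rintro x hx hx0
      obtain ⟨v, hvT, rfl⟩ := Submodule.mem_map.mp hx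
      have hv0 : v ≠ 0 := fun h' => hx0 (by rw [h']; exact (elimMap _).map_zero)
      have hform := qf_elim_formula A B X (s/2) v
      rw [hform]
      have := hs v hvT hv0
      linarith
  have hfrS : Module.finrank ℂ S = Fintype.card ι - iNeg h := by
    rw [hSdef, finrank_eigSpan, card_nonneg_eig]
  have hiNle : iNeg h ≤ Fintype.card ι := by
    rw [iNeg_eq_card]; exact Fintype.card_subtype_le _
  have hrank := rank_add_ker h B
  have hre := rank_fromColumns_eq (A := A) (B := B) X
  rw [← hKdef] at hrank
  omega
end lowerbound

section final
variable {ι κ : Type*} [Fintype ι] [DecidableEq ι] [Fintype κ] [DecidableEq κ]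

lemma rank_sub_le (A : Matrix ι ι ℂ) (B : Matrix ι κ ℂ) (X : Matrix κ κ ℂ) :
    (A - B * X * Bᴴ).rank ≤ (fromCols A B).rank := by
  have e : A - B * X * Bᴴ = fromCols A B * fromRows (1 : Matrix ι ι ℂ) (-(X * Bᴴ)) := by
    rw [Matrix.fromCols_mul_fromRows]
    simp only [Matrix.mul_one, Matrix.mul_neg, Matrix.mul_assoc, sub_eq_add_neg]
  rw [e]
  exact rank_mul_le_left _ _
end final

theorem stmt11 (m n : ℕ) (A : Matrix (Fin m) (Fin m) ℂ) (hA : A.IsHermitian)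
    (B : Matrix (Fin m) (Fin n) ℂ)
    (hM : (fromBlocks A B Bᴴ (0 : Matrix (Fin n) (Fin n) ℂ)).IsHermitian) :
    IsGreatest {k | ∃ X : Matrix (Fin n) (Fin n) ℂ, X.IsHermitian ∧
        ∃ h : (A - B * X * Bᴴ).IsHermitian, k = iPos h} (iPos hM) ∧
    IsLeast {k | ∃ X : Matrix (Fin n) (Fin n) ℂ, X.IsHermitian ∧
        ∃ h : (A - B * X * Bᴴ).IsHermitian, k = iPos h}
      ((fromCols A B).rank - iNeg hM) ∧
    IsGreatest {k | ∃ X : Matrix (Fin n) (Fin n) ℂ, X.IsHermitian ∧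
        ∃ h : (A - B * X * Bᴴ).IsHermitian, k = iNeg h} (iNeg hM) ∧
    IsLeast {k | ∃ X : Matrix (Fin n) (Fin n) ℂ, X.IsHermitian ∧
        ∃ h : (A - B * X * Bᴴ).IsHermitian, k = iNeg h}
      ((fromCols A B).rank - iPos hM) := by
  refine ⟨⟨?_, ?_⟩, ⟨?_, ?_⟩, ⟨?_, ?_⟩, ⟨?_, ?_⟩⟩
  · obtain ⟨X, hX, h, heq⟩ := exists_max_pos hA hM
    exact ⟨X, hX, h, heq.symm⟩
  · rintro k ⟨X, hX, h, rfl⟩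
    exact iPos_le_iPos_M X h hM
  · obtain ⟨X, hX, h, heq⟩ := exists_max_neg hA hM
    refine ⟨X, hX, h, ?_⟩
    have h1 := iPos_add_iNeg_eq_rank h
    have h2 := rank_sub_le A B X
    have h3 := rank_le_iPos_add_iNeg_M hM X h
    omega
  · rintro k ⟨X, hX, h, rfl⟩
    have h3 := rank_le_iPos_add_iNeg_M hM X h
    omega
  · obtain ⟨X, hX, h, heq⟩ := exists_max_neg hA hM
    exact ⟨X, hX, h, heq.symm⟩
  · rintro k ⟨X, hX, h, rfl⟩
    exact iNeg_le_iNeg_M X h hM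
  · obtain ⟨X, hX, h, heq⟩ := exists_max_pos hA hM
    refine ⟨X, hX, h, ?_⟩
    have h1 := iPos_add_iNeg_eq_rank h
    have h2 := rank_sub_le A B X
    have h3 := rank_le_iNeg_add_iPos_M hM X h
    omega
  · rintro k ⟨X, hX, h, rfl⟩
    have h3 := rank_le_iNeg_add_iPos_M hM X h
    omega
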